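/- For every g in BV (normalized function of bounded variation on [0,1]), the operator norm of the functional F_g : C[0,1] → ℝ defined by F_g(h) = ∫ h dg equals the total variation: ‖F_g‖ = Var(g). -/

import Mathlib

/-- A partition of `[0,1]`: `0 = x 0 < x 1 < ... < x n = 1`. -/
def IsPartition (n : ℕ) (x : ℕ → ℝ) : Prop :=
  x 0 = 0 ∧ x n = 1 ∧ ∀ i < n, x i < x (i + 1)

/-- The Riemann-Stieltjes sum `S(g,h,Z) = Σ h(x_i)(g(x_i) - g(x_{i-1}))`. -/
noncomputable def rsSum (g h : ℝ → ℝ) (n : ℕ) (x : ℕ → ℝ) : ℝ :=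
  ∑ i ∈ Finset.range n, h (x (i + 1)) * (g (x (i + 1)) - g (x i))

/-- `I` is the Riemann-Stieltjes integral `∫ h dg` over `[0,1]`. -/
def RSIntegralEq (h g : ℝ → ℝ) (I : ℝ) : Prop :=
  ∀ ε > (0:ℝ), ∃ δ > (0:ℝ), ∀ (n : ℕ) (x : ℕ → ℝ), IsPartition n x →
    (∀ i < n, x (i + 1) - x i < δ) → |I - rsSum g h n x| < ε

open MeasureTheory Set Finset Filter

section aux

lemma part_mono {n : ℕ} {x : ℕ → ℝ} (hp : IsPartition n x) :
    ∀ i j, i ≤ j → j ≤ n → x i ≤ x j := by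
  intro i j hij hjn
  induction j with
  | zero => simp_all
  | succ m ih =>
    rcases Nat.lt_or_ge i (m+1) with h | h
    · exact le_trans (ih (Nat.lt_succ_iff.mp h) (le_trans (Nat.le_succ m) hjn))
        (le_of_lt (hp.2.2 m (Nat.lt_of_succ_le hjn)))
    · have : i = m + 1 := le_antisymm hij h
      simp [this]

lemma part_mem {n : ℕ} {x : ℕ → ℝ} (hp : IsPartition n x) :
    ∀ i ≤ n, x i ∈ Set.Icc (0:ℝ) 1 := by
  intro i hi
  constructor
  · rw [← hp.1]; exact part_mono hp 0 i (Nat.zero_le i) hi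
  · rw [← hp.2.1]; exact part_mono hp i n hi le_rfl

/-- uniform partition -/
lemma exists_fine_partition (δ : ℝ) (hδ : 0 < δ) :
    ∃ (n : ℕ) (x : ℕ → ℝ), IsPartition n x ∧ (∀ i < n, x (i + 1) - x i < δ) := by
  obtain ⟨n, hn⟩ := exists_nat_gt (1/δ)
  have hn0 : 0 < (n:ℝ) := lt_trans (by positivity) hn
  refine ⟨n, fun i => (i:ℝ)/n, by
    refine ⟨by simp, by field_simp, fun i _ => ?_⟩
    · push_cast
      exact div_lt_div_of_pos_right (by linarith) hn0, fun i _ => ?_⟩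
  · push_cast
    rw [div_sub_div_same, add_sub_cancel_left]
    rw [div_lt_iff₀ hn0]
    calc (1:ℝ) = (1/δ) * δ := by field_simp
    _ < n * δ := by apply mul_lt_mul_of_pos_right hn hδ
    _ = δ * n := mul_comm _ _
end aux

section upper

lemma sum_abs_le_var (g : ℝ → ℝ) (hbv : BoundedVariationOn g (Set.Icc 0 1))
    {n : ℕ} {x : ℕ → ℝ} (hp : IsPartition n x) :
    ∑ i ∈ Finset.range n, |g (x (i+1)) - g (x i)| ≤
      (eVariationOn g (Set.Icc 0 1)).toReal := by
  rw [← ENNReal.ofReal_le_iff_le_toReal hbv, ENNReal.ofReal_sum_of_nonneg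
    (fun i _ => abs_nonneg _)]
  have : ∀ i ∈ Finset.range n, ENNReal.ofReal |g (x (i+1)) - g (x i)|
      = edist (g (x (i+1))) (g (x i)) := by
    intro i _; rw [edist_dist, Real.dist_eq]
  rw [Finset.sum_congr rfl this, ← Nat.Ico_zero_eq_range]
  exact eVariationOn.sum_le_of_monotoneOn_Icc (f := g)
    (fun i hi j hj hij => part_mono hp i j hij hj.2)
    (fun i hi => part_mem hp i hi.2)

lemma abs_I_le_var (g : ℝ → ℝ) (hbv : BoundedVariationOn g (Set.Icc 0 1))
    (h : ℝ → ℝ) (I : ℝ) (hh1 : ∀ x ∈ Set.Icc (0:ℝ) 1, |h x| ≤ 1)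
    (hRS : RSIntegralEq h g I) :
    |I| ≤ (eVariationOn g (Set.Icc 0 1)).toReal := by
  refine le_of_forall_pos_le_add (fun ε hε => ?_)
  obtain ⟨δ, hδ, hδ'⟩ := hRS ε hε
  obtain ⟨n, x, hp, hfine⟩ := exists_fine_partition δ hδ
  have h1 := hδ' n x hp hfine
  have h2 : |rsSum g h n x| ≤ (eVariationOn g (Set.Icc 0 1)).toReal := by
    refine le_trans (Finset.abs_sum_le_sum_abs _ _) ?_
    refine le_trans (Finset.sum_le_sum (g := fun i => |g (x (i+1)) - g (x i)|)
      (fun i hi => ?_)) (sum_abs_le_var g hbv hp)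
    rw [abs_mul]
    refine mul_le_of_le_one_left (abs_nonneg _) ?_
    exact hh1 _ (part_mem hp (i+1) (Finset.mem_range.mp hi))
  calc |I| ≤ |I - rsSum g h n x| + |rsSum g h n x| := by
        have := abs_sub_abs_le_abs_sub I (rsSum g h n x); linarith [abs_sub_abs_le_abs_sub I (rsSum g h n x)]
  _ ≤ ε + (eVariationOn g (Set.Icc 0 1)).toReal := add_le_add (le_of_lt h1) h2
  _ = (eVariationOn g (Set.Icc 0 1)).toReal + ε := add_comm _ _

end upper

section pr

/-- index of the partition interval containing t -/
noncomputable def pr (x : ℕ → ℝ) (n : ℕ) (t : ℝ) : ℕ :=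
  Nat.findGreatest (fun j => x j ≤ t) n

lemma pr_mono (x : ℕ → ℝ) (n : ℕ) : Monotone (pr x n) :=
  fun s t hst => Nat.findGreatest_mono (fun j (h : x j ≤ s) => le_trans h hst) le_rfl

lemma pr_le (x : ℕ → ℝ) (n : ℕ) (t : ℝ) : pr x n t ≤ n := Nat.findGreatest_le n

lemma pr_meas (g : ℝ → ℝ) (x : ℕ → ℝ) (n : ℕ) :
    Measurable (fun t => g (x (pr x n t))) :=
  Measurable.comp (f := pr x n) (g := fun j : ℕ => g (x j)) measurable_from_top
    ((pr_mono x n).measurable)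

lemma x_pr_le {n : ℕ} {x : ℕ → ℝ} (hp : IsPartition n x) {t : ℝ} (ht : 0 ≤ t) :
    x (pr x n t) ≤ t :=
  Nat.findGreatest_spec (P := fun j => x j ≤ t) (Nat.zero_le n) (by show x 0 ≤ t; rw [hp.1]; exact ht)

lemma pr_lt_n {n : ℕ} {x : ℕ → ℝ} (hp : IsPartition n x) {t : ℝ} (ht0 : 0 ≤ t) (ht : t < 1) :
    pr x n t < n := by
  rcases Nat.lt_or_ge (pr x n t) n with h | h
  · exact h
  · exfalso
    have he : pr x n t = n := le_antisymm (pr_le x n t) h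
    have := x_pr_le hp ht0
    rw [he, hp.2.1] at this
    linarith

lemma lt_x_pr {n : ℕ} {x : ℕ → ℝ} (hp : IsPartition n x) {t : ℝ} (h : pr x n t < n) :
    t < x (pr x n t + 1) := by
  by_contra hc
  push_neg at hc
  exact Nat.findGreatest_is_greatest (Nat.lt_succ_self _) h hc

lemma pr_eq {n : ℕ} {x : ℕ → ℝ} (hp : IsPartition n x) {i : ℕ} (hi : i < n)
    {t : ℝ} (ht : t ∈ Set.Ioo (x i) (x (i+1))) : pr x n t = i := by
  rw [pr, Nat.findGreatest_eq_iff]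
  refine ⟨le_of_lt hi, fun _ => le_of_lt ht.1, fun k hk hkn hc => ?_⟩
  have : x (i+1) ≤ x k := part_mono hp (i+1) k hk hkn
  linarith [ht.2]

end pr

section repr

lemma rsSum_repr (g φ : ℝ → ℝ) (c : ℝ) (hφ : MeasureTheory.Integrable φ) (hg0 : g 0 = 0)
    {n : ℕ} {x : ℕ → ℝ} (hp : IsPartition n x) :
    rsSum g (fun y => c + ∫ u in (0:ℝ)..y, φ u) n x
      = (c + ∫ u in (0:ℝ)..(1:ℝ), φ u) * g 1
        - ∫ u in Set.Ioc (0:ℝ) 1, g (x (pr x n u)) * φ u := by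
  set h : ℝ → ℝ := fun y => c + ∫ u in (0:ℝ)..y, φ u with hh
  have hΔ : ∀ a b : ℝ, h b - h a = ∫ u in a..b, φ u := by
    intro a b
    simp only [hh]
    rw [add_sub_add_left_eq_sub]
    exact intervalIntegral.integral_interval_sub_left
      (hφ.intervalIntegrable) (hφ.intervalIntegrable)
  -- integrability of the step function times φ
  have hbd : ∃ C, ∀ u : ℝ, ‖g (x (pr x n u))‖ ≤ C := by
    refine ⟨∑ j ∈ Finset.range (n+1), |g (x j)|, fun u => ?_⟩
    exact Finset.single_le_sum (f := fun j => |g (x j)|) (fun j _ => abs_nonneg _)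
      (Finset.mem_range.mpr (Nat.lt_succ_of_le (pr_le x n u)))
  have hstep_int : MeasureTheory.Integrable (fun u => g (x (pr x n u)) * φ u) := by
    exact hφ.bdd_mul (c := hbd.choose) ((pr_meas g x n).aestronglyMeasurable) (Filter.Eventually.of_forall hbd.choose_spec)
  -- Abel summation
  have habel : rsSum g h n x
      = h (x n) * g (x n) - h (x 0) * g (x 0)
        - ∑ i ∈ Finset.range n, g (x i) * (h (x (i+1)) - h (x i)) := by
    rw [← Finset.sum_range_sub (fun j => h (x j) * g (x j)) n, rsSum,
      ← Finset.sum_sub_distrib]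
    congr 1; ext i; ring
  rw [habel, hp.1, hp.2.1, hg0]
  have hstep : ∀ i < n, ∫ u in (x i)..(x (i+1)), g (x (pr x n u)) * φ u
      = g (x i) * (h (x (i+1)) - h (x i)) := by
    intro i hi
    rw [hΔ, ← intervalIntegral.integral_const_mul]
    apply intervalIntegral.integral_congr_ae
    have hnull : ∀ᵐ u : ℝ, u ≠ x (i+1) := by
      rw [MeasureTheory.ae_iff]
      have : {u : ℝ | ¬ u ≠ x (i+1)} = {x (i+1)} := by ext u; simp
      rw [this]
      exact MeasureTheory.measure_singleton _
    filter_upwards [hnull] with u hu hmem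
    rw [Set.uIoc_of_le (le_of_lt (hp.2.2 i hi))] at hmem
    have : u ∈ Set.Ioo (x i) (x (i+1)) := ⟨hmem.1, lt_of_le_of_ne hmem.2 hu⟩
    rw [pr_eq hp hi this]
  have hsum : ∑ i ∈ Finset.range n, g (x i) * (h (x (i+1)) - h (x i))
      = ∫ u in Set.Ioc (0:ℝ) 1, g (x (pr x n u)) * φ u := by
    have he : ∑ i ∈ Finset.range n, g (x i) * (h (x (i+1)) - h (x i))
        = ∑ i ∈ Finset.range n, ∫ u in (x i)..(x (i+1)), g (x (pr x n u)) * φ u :=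
      Finset.sum_congr rfl (fun i hi => (hstep i (Finset.mem_range.mp hi)).symm)
    rw [he]
    rw [intervalIntegral.sum_integral_adjacent_intervals
      (fun k hk => hstep_int.intervalIntegrable)]
    rw [hp.1, hp.2.1, intervalIntegral.integral_of_le (by norm_num : (0:ℝ) ≤ 1)]
  rw [hsum]
  simp only [hh]
  ring

end repr

section exist

lemma rs_exists (g φ : ℝ → ℝ) (B c : ℝ)
    (hg0 : g 0 = 0)
    (hgB : ∀ t ∈ Set.Icc (0:ℝ) 1, |g t| ≤ B)
    (hlc : ∀ t ∈ Set.Ioo (0:ℝ) 1,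
      Filter.Tendsto g (nhdsWithin t (Set.Ioo 0 t)) (nhds (g t)))
    (hφ : MeasureTheory.Integrable φ) :
    RSIntegralEq (fun y => c + ∫ u in (0:ℝ)..y, φ u) g
      ((c + ∫ u in (0:ℝ)..(1:ℝ), φ u) * g 1 - ∫ u in Set.Ioc (0:ℝ) 1, g u * φ u) := by
  intro ε hε
  by_contra hcon
  push_neg at hcon
  have key : ∀ k : ℕ, ∃ (n : ℕ) (x : ℕ → ℝ), IsPartition n x ∧
      (∀ i < n, x (i + 1) - x i < 1/(k+1)) ∧
      ε ≤ |((c + ∫ u in (0:ℝ)..(1:ℝ), φ u) * g 1 - ∫ u in Set.Ioc (0:ℝ) 1, g u * φ u)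
          - rsSum g (fun y => c + ∫ u in (0:ℝ)..y, φ u) n x| := by
    intro k
    obtain ⟨n, x, hp, hf, hge⟩ := hcon (1/(k+1)) (by positivity)
    exact ⟨n, x, hp, hf, hge⟩
  choose N X hpart hfine hge using key
  -- the step approximations
  set F : ℕ → ℝ → ℝ := fun k u => g (X k (pr (X k) (N k) u)) * φ u with hF
  set μ : MeasureTheory.Measure ℝ := MeasureTheory.volume.restrict (Set.Ioc 0 1) with hμ
  -- rewrite the distance hypothesis
  have hge' : ∀ k : ℕ, ε ≤ |(∫ u, F k u ∂μ) - ∫ u, g u * φ u ∂μ| := by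
    intro k
    have := hge k
    rw [rsSum_repr g φ c hφ hg0 (hpart k)] at this
    convert this using 2
    rw [hμ]
    ring
  -- dominated convergence
  have hB0 : 0 ≤ B := le_trans (abs_nonneg _) (hgB 0 (by norm_num))
  have hdct : Filter.Tendsto (fun k => ∫ u, F k u ∂μ) Filter.atTop
      (nhds (∫ u, g u * φ u ∂μ)) := by
    apply MeasureTheory.tendsto_integral_of_dominated_convergence
      (bound := fun u => B * |φ u|)
    · intro k
      exact ((pr_meas g (X k) (N k)).aestronglyMeasurable.mono_measure
        MeasureTheory.Measure.restrict_le_self).mul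
        (hφ.aestronglyMeasurable.restrict)
    · exact ((hφ.abs.const_mul B).restrict)
    · intro k
      filter_upwards [MeasureTheory.ae_restrict_mem measurableSet_Ioc] with u hu
      simp only [hF, Real.norm_eq_abs, abs_mul]
      apply mul_le_mul_of_nonneg_right _ (abs_nonneg _)
      exact hgB _ (part_mem (hpart _) _ (pr_le _ _ _))
    · filter_upwards [MeasureTheory.ae_restrict_mem measurableSet_Ioc] with u hu
      apply Filter.Tendsto.mul_const
      -- pointwise convergence of the step approximations
      rcases eq_or_lt_of_le hu.2 with h1 | h1
      · -- u = 1
        have : ∀ k, X k (pr (X k) (N k) u) = u := by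
          intro k
          have : pr (X k) (N k) u = N k := by
            apply Nat.findGreatest_eq
            show X k (N k) ≤ u
            rw [(hpart k).2.1, h1]
          rw [this, (hpart k).2.1, h1]
        simp only [this]
        exact tendsto_const_nhds
      · -- u ∈ (0,1)
        rw [Metric.tendsto_atTop]
        intro ε' hε'
        have hu' : u ∈ Set.Ioo (0:ℝ) 1 := ⟨hu.1, h1⟩
        obtain ⟨δ', hδ', hδ''⟩ := Metric.tendsto_nhdsWithin_nhds.mp (hlc u hu') ε' hε'
        obtain ⟨K, hK⟩ := exists_nat_gt (1 / min δ' u)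
        have hmin : 0 < min δ' u := lt_min hδ' hu.1
        refine ⟨K, fun k hk => ?_⟩
        have hkK : 1/((k:ℝ)+1) < min δ' u := by
          rw [div_lt_iff₀ (by positivity)]
          rw [div_lt_iff₀ hmin] at hK
          have h4 : (K:ℝ) ≤ k := Nat.cast_le.mpr hk
          nlinarith
        set y := X k (pr (X k) (N k) u) with hy
        have hyle : y ≤ u := x_pr_le (hpart k) (le_of_lt hu.1)
        have hprlt : pr (X k) (N k) u < N k := pr_lt_n (hpart k) (le_of_lt hu.1) h1
        have hygt : u - 1/((k:ℝ)+1) < y := by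
          have h2 := lt_x_pr (hpart k) hprlt
          have h3 := hfine k _ hprlt
          push_cast at h3 ⊢
          linarith
        rcases eq_or_lt_of_le hyle with hyu | hyu
        · rw [hyu]; simpa using hε'
        · apply hδ''
          · constructor
            · have : (0:ℝ) < u - 1/((k:ℝ)+1) := by
                have := min_le_right δ' u
                linarith
              linarith
            · exact hyu
          · rw [Real.dist_eq, abs_of_neg (by linarith)]
            have := min_le_left δ' u
            linarith
  -- contradiction
  rw [Metric.tendsto_atTop] at hdct
  obtain ⟨K, hK⟩ := hdct ε hε
  have := hK K le_rfl
  rw [Real.dist_eq] at this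
  exact absurd (hge' K) (not_le.mpr this)

end exist

section lowprep

lemma g_bdd (g : ℝ → ℝ) (hbv : BoundedVariationOn g (Set.Icc 0 1)) (h0 : g 0 = 0) :
    ∀ t ∈ Set.Icc (0:ℝ) 1, |g t| ≤ (eVariationOn g (Set.Icc 0 1)).toReal := by
  intro t ht
  have h1 : edist (g t) (g 0) ≤ eVariationOn g (Set.Icc 0 1) :=
    eVariationOn.edist_le g ht (by norm_num)
  have h2 := ENNReal.toReal_mono hbv h1
  rw [edist_dist, ENNReal.toReal_ofReal dist_nonneg, Real.dist_eq, h0, sub_zero] at h2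
  exact h2

lemma g_intOn (g : ℝ → ℝ) (hbv : BoundedVariationOn g (Set.Icc 0 1)) (h0 : g 0 = 0) :
    MeasureTheory.IntegrableOn g (Set.Ioc 0 1) := by
  obtain ⟨p, q, hp, hq, hpq⟩ :=
    hbv.locallyBoundedVariationOn.exists_monotoneOn_sub_monotoneOn
  have hmeas : AEMeasurable g (MeasureTheory.volume.restrict (Set.Icc 0 1)) := by
    rw [hpq]
    exact (aemeasurable_restrict_of_monotoneOn measurableSet_Icc hp).sub
      (aemeasurable_restrict_of_monotoneOn measurableSet_Icc hq)
  have hmeas' : AEMeasurable g (MeasureTheory.volume.restrict (Set.Ioc 0 1)) :=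
    hmeas.mono_measure (MeasureTheory.Measure.restrict_mono Set.Ioc_subset_Icc_self le_rfl)
  refine MeasureTheory.Integrable.mono' (g := fun _ => (eVariationOn g (Set.Icc 0 1)).toReal)
    (MeasureTheory.integrable_const _) hmeas'.aestronglyMeasurable ?_
  filter_upwards [MeasureTheory.ae_restrict_mem measurableSet_Ioc] with u hu
  exact g_bdd g hbv h0 u ⟨le_of_lt hu.1, hu.2⟩

lemma integral_indicator_Ioc (c d y : ℝ) (hc : 0 ≤ c) (hcd : c ≤ d) (hy : 0 ≤ y) :
    ∫ u in (0:ℝ)..y, (Set.Ioc c d).indicator (fun _ => (1:ℝ)) u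
      = min d y - min c y := by
  rw [intervalIntegral.integral_of_le hy, MeasureTheory.setIntegral_indicator measurableSet_Ioc]
  rw [Set.Ioc_inter_Ioc, MeasureTheory.setIntegral_const, Real.volume_real_Ioc]
  simp only [smul_eq_mul, mul_one]
  rw [max_eq_right hc]
  rcases le_total y c with h | h
  · rw [min_eq_right (le_trans h hcd), min_eq_right h, sub_self,
      min_eq_left (le_trans h hcd)]
    rw [max_eq_right (by linarith)]
  · have h2 : (0:ℝ) ≤ y ⊓ d - c := by
      have := le_min h hcd; linarith
    rw [max_eq_left h2, min_comm y d, min_eq_left h]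

lemma clamp_nonneg (a y η : ℝ) (hη : 0 < η) : 0 ≤ (min a y - min (a - η) y)/η := by
  apply div_nonneg _ (le_of_lt hη)
  have : min (a - η) y ≤ min a y := min_le_min (by linarith) le_rfl
  linarith

lemma clamp_le_one (a y η : ℝ) (hη : 0 < η) : (min a y - min (a - η) y)/η ≤ 1 := by
  rw [div_le_one hη]
  rcases le_total y (a - η) with h | h
  · rw [min_eq_right (by linarith), min_eq_right h]; linarith
  · rw [min_eq_left h]
    have : min a y ≤ a := min_le_left _ _
    linarith

lemma clamp_antitone (a b y η : ℝ) (hη : 0 < η) (hab : a ≤ b) :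
    (min b y - min (b - η) y)/η ≤ (min a y - min (a - η) y)/η := by
  apply (div_le_div_iff_of_pos_right hη).mpr
  simp only [min_def]
  split_ifs <;> linarith

lemma tri_chain (g : ℝ → ℝ) (t : ℕ → ℝ) : ∀ p q : ℕ, p ≤ q →
    |g (t q) - g (t p)| ≤ ∑ j ∈ Finset.Ico p q, |g (t (j+1)) - g (t j)| := by
  intro p q hpq
  induction q, hpq using Nat.le_induction with
  | base => simp
  | succ q hpq ih =>
    rw [Finset.sum_Ico_succ_top hpq]
    calc |g (t (q+1)) - g (t p)| ≤ |g (t (q+1)) - g (t q)| + |g (t q) - g (t p)| := by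
          have := abs_sub_le (g (t (q+1))) (g (t q)) (g (t p)); linarith
    _ ≤ (∑ j ∈ Finset.Ico p q, |g (t (j+1)) - g (t j)|) + |g (t (q+1)) - g (t q)| := by
          linarith
lemma chain_le (k : ℕ → ℕ) : ∀ n : ℕ, (∀ i < n, k i ≤ k (i+1)) → k 0 ≤ k n := by
  intro n
  induction n with
  | zero => exact fun _ => le_rfl
  | succ m ih =>
    intro hk
    exact le_trans (ih (fun i hi => hk i (Nat.lt_succ_of_lt hi))) (hk m (Nat.lt_succ_self m))

lemma sum_chain (D : ℕ → ℝ) (k : ℕ → ℕ) (n : ℕ) (hk : ∀ i < n, k i ≤ k (i+1)) :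
    ∑ i ∈ Finset.range n, ∑ j ∈ Finset.Ico (k i) (k (i+1)), D j
      = ∑ j ∈ Finset.Ico (k 0) (k n), D j := by
  induction n with
  | zero => simp
  | succ m ih =>
    rw [Finset.sum_range_succ, ih (fun i hi => hk i (Nat.lt_succ_of_lt hi))]
    apply Finset.sum_Ico_consecutive
    · exact chain_le k m (fun i hi => hk i (Nat.lt_succ_of_lt hi))
    · exact hk m (Nat.lt_succ_self m)

end lowprep

section refine

lemma refine_partition (g : ℝ → ℝ) (n : ℕ) (u : ℕ → ℝ) (hu : Monotone u)
    (us : ∀ i, u i ∈ Set.Icc (0:ℝ) 1) :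
    ∃ (M : ℕ) (t : ℕ → ℝ), 1 ≤ M ∧ t 0 = 0 ∧ t M = 1 ∧
      (∀ i < M, t i < t (i+1)) ∧ (∀ i ≤ M, t i ∈ Set.Icc (0:ℝ) 1) ∧
      ∑ i ∈ Finset.range n, |g (u (i+1)) - g (u i)|
        ≤ ∑ j ∈ Finset.range M, |g (t (j+1)) - g (t j)| := by
  classical
  set F : Finset ℝ := insert 0 (insert 1 ((Finset.range (n+1)).image u)) with hF
  set L : List ℝ := F.sort (· ≤ ·) with hL
  have hsort : L.Pairwise (· < ·) := (Finset.sortedLT_sort F).pairwise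
  have hmem : ∀ a : ℝ, a ∈ L ↔ a ∈ F := fun a => Finset.mem_sort _
  have hF01 : ∀ a ∈ F, a ∈ Set.Icc (0:ℝ) 1 := by
    intro a ha
    rw [hF] at ha
    simp only [Finset.mem_insert, Finset.mem_image] at ha
    rcases ha with rfl | rfl | ⟨i, _, rfl⟩
    · exact ⟨le_rfl, by norm_num⟩
    · exact ⟨by norm_num, le_rfl⟩
    · exact us i
  have h0L : (0:ℝ) ∈ L := (hmem 0).mpr (by simp [hF])
  have h1L : (1:ℝ) ∈ L := (hmem 1).mpr (by simp [hF])
  have hlen2 : 2 ≤ L.length := by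
    rw [hL, Finset.length_sort]
    exact Finset.one_lt_card_iff.mpr ⟨0, 1, by simp [hF], by simp [hF], by norm_num⟩
  set M : ℕ := L.length - 1 with hM
  have hM1 : 1 ≤ M := by omega
  have hMlen : M < L.length := by omega
  set t : ℕ → ℝ := fun i => if h : i < L.length then L.get ⟨i, h⟩ else 1 with ht
  have htget : ∀ (i : ℕ) (h : i < L.length), t i = L.get ⟨i, h⟩ := by
    intro i h; rw [ht]; simp [h]
  have hstrict : ∀ i j (hi : i < L.length) (hj : j < L.length), i < j → t i < t j := by
    intro i j hi hj hij
    rw [htget i hi, htget j hj]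
    exact hsort.rel_get_of_lt hij
  have htmem : ∀ i, t i ∈ Set.Icc (0:ℝ) 1 := by
    intro i
    rw [ht]
    by_cases h : i < L.length
    · simp only [h, dif_pos]
      exact hF01 _ ((hmem _).mp (L.get_mem _))
    · simp only [h, dif_neg, not_false_iff]
      exact ⟨by norm_num, le_rfl⟩
  have ht0 : t 0 = 0 := by
    obtain ⟨j, hj⟩ := List.mem_iff_get.mp h0L
    refine le_antisymm ?_ (htmem 0).1
    rw [← hj, htget 0 (by omega)]
    rcases Nat.eq_or_lt_of_le (Nat.zero_le j.1) with h | h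
    · have : (⟨0, by omega⟩ : Fin L.length) = j := Fin.ext (by simpa using h)
      rw [this]
    · have : (⟨0, by omega⟩ : Fin L.length) < j := Fin.lt_def.mpr (by simpa using h)
      exact le_of_lt (hsort.rel_get_of_lt this)
  have htM : t M = 1 := by
    obtain ⟨j, hj⟩ := List.mem_iff_get.mp h1L
    refine le_antisymm (htmem M).2 ?_
    rw [← hj, htget M hMlen]
    rcases Nat.eq_or_lt_of_le (show j.1 ≤ M by omega) with h | h
    · have : j = (⟨M, hMlen⟩ : Fin L.length) := Fin.ext (by simpa using h)
      rw [this]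
    · have : j < (⟨M, hMlen⟩ : Fin L.length) := Fin.lt_def.mpr (by simpa using h)
      exact le_of_lt (hsort.rel_get_of_lt this)
  refine ⟨M, t, hM1, ht0, htM, fun i hi => hstrict i (i+1) (by omega) (by omega) (by omega),
    fun i _ => htmem i, ?_⟩
  -- index function
  set k : ℕ → ℕ := fun i => L.idxOf (u i) with hk
  have hkmem : ∀ i ≤ n, u i ∈ L := by
    intro i hi
    rw [hmem, hF]
    simp only [Finset.mem_insert, Finset.mem_image]
    exact Or.inr (Or.inr ⟨i, Finset.mem_range.mpr (by omega), rfl⟩)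
  have hklt : ∀ i ≤ n, k i < L.length := fun i hi => List.idxOf_lt_length_iff.mpr (hkmem i hi)
  have htk : ∀ i ≤ n, t (k i) = u i := by
    intro i hi
    rw [htget (k i) (hklt i hi), List.idxOf_get]
  have hkmono : ∀ i < n, k i ≤ k (i+1) := by
    intro i hi
    by_contra hc
    push_neg at hc
    have := hstrict (k (i+1)) (k i) (hklt (i+1) (by omega)) (hklt i (by omega)) hc
    rw [htk i (by omega), htk (i+1) (by omega)] at this
    exact absurd (hu (Nat.le_succ i)) (not_le.mpr this)
  have hkM : ∀ i ≤ n, k i ≤ M := fun i hi => by have := hklt i hi; omega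
  calc ∑ i ∈ Finset.range n, |g (u (i+1)) - g (u i)|
      = ∑ i ∈ Finset.range n, |g (t (k (i+1))) - g (t (k i))| := by
        apply Finset.sum_congr rfl
        intro i hi
        rw [htk i (le_of_lt (Finset.mem_range.mp hi)), htk (i+1) (Finset.mem_range.mp hi)]
  _ ≤ ∑ i ∈ Finset.range n, ∑ j ∈ Finset.Ico (k i) (k (i+1)), |g (t (j+1)) - g (t j)| := by
        apply Finset.sum_le_sum
        intro i hi
        exact tri_chain g t (k i) (k (i+1)) (hkmono i (Finset.mem_range.mp hi))
  _ = ∑ j ∈ Finset.Ico (k 0) (k n), |g (t (j+1)) - g (t j)| := sum_chain _ k n hkmono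
  _ ≤ ∑ j ∈ Finset.range M, |g (t (j+1)) - g (t j)| := by
        apply Finset.sum_le_sum_of_subset_of_nonneg
        · intro j hj
          rw [Finset.mem_Ico] at hj
          rw [Finset.mem_range]
          have := hkM n le_rfl
          omega
        · intro j _ _
          exact abs_nonneg _

end refine

section tele

lemma tele_sum (f : ℕ → ℝ) (a b : ℕ) (hab : a ≤ b) :
    ∑ i ∈ Finset.Ico a b, (f (i+1) - f i) = f b - f a := by
  induction b, hab using Nat.le_induction with
  | base => simp
  | succ b hab ih => rw [Finset.sum_Ico_succ_top hab, ih]; ring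

end tele

section construct

lemma construct (g : ℝ → ℝ) (hbv : BoundedVariationOn g (Set.Icc 0 1)) (h0 : g 0 = 0)
    (hlc : ∀ x ∈ Set.Ioo (0:ℝ) 1,
      Filter.Tendsto g (nhdsWithin x (Set.Ioo 0 x)) (nhds (g x)))
    (M : ℕ) (t : ℕ → ℝ) (hM : 1 ≤ M) (hp : IsPartition M t)
    (ε₀ : ℝ) (hε₀ : 0 < ε₀) :
    ∃ (h : ℝ → ℝ) (I : ℝ), ContinuousOn h (Set.Icc 0 1) ∧
      (∀ x ∈ Set.Icc (0:ℝ) 1, |h x| ≤ 1) ∧ RSIntegralEq h g I ∧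
      ∑ j ∈ Finset.range M, |g (t (j+1)) - g (t j)| - ε₀ < |I| := by
  classical
  obtain ⟨ht0, htM, hts⟩ := hp
  have hp' : IsPartition M t := ⟨ht0, htM, hts⟩
  have htmono : ∀ i j, i ≤ j → j ≤ M → t i ≤ t j := fun i j => part_mono hp' i j
  have htmem : ∀ i ≤ M, t i ∈ Set.Icc (0:ℝ) 1 := part_mem hp'
  have ht1pos : 0 < t 1 := by
    have := hts 0 (by omega); rw [ht0] at this; exact this
  have htiIoo : ∀ i, 1 ≤ i → i < M → t i ∈ Set.Ioo (0:ℝ) 1 := by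
    intro i h1 h2
    refine ⟨lt_of_lt_of_le ht1pos (htmono 1 i h1 (le_of_lt h2)), ?_⟩
    calc t i < t (i+1) := hts i h2
    _ ≤ t M := htmono (i+1) M h2 le_rfl
    _ = 1 := htM
  set ε₂ : ℝ := ε₀ / (4*M+4) with hε₂def
  have hε₂ : 0 < ε₂ := by positivity
  -- signs
  set s : ℕ → ℝ := fun i => if g (t i) < g (t (i-1)) then (-1:ℝ) else 1 with hs
  have hs_abs : ∀ i, |s i| = 1 := by
    intro i; rw [hs]; simp only; split_ifs <;> simp
  have hs_mul : ∀ j, s (j+1) * (g (t (j+1)) - g (t j)) = |g (t (j+1)) - g (t j)| := by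
    intro j; rw [hs]; simp only [Nat.add_sub_cancel]; split_ifs with hlt
    · rw [abs_of_neg (by linarith)]; ring
    · rw [abs_of_nonneg (by linarith [not_lt.mp hlt])]; ring
  -- choice of η
  have hQ : ∀ i, ∃ d, 0 < d ∧ (1 ≤ i → i < M →
      ∀ v, t i - d < v → v < t i → |g v - g (t i)| ≤ ε₂) := by
    intro i
    by_cases hi : 1 ≤ i ∧ i < M
    · have hti := htiIoo i hi.1 hi.2
      obtain ⟨δ, hδ0, hδ⟩ := Metric.tendsto_nhdsWithin_nhds.mp (hlc (t i) hti) ε₂ hε₂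
      refine ⟨min δ (t i), lt_min hδ0 hti.1, fun _ _ v hv1 hv2 => ?_⟩
      have hv0 : 0 < v := by have := min_le_right δ (t i); linarith
      have h2 := hδ (show v ∈ Set.Ioo 0 (t i) from ⟨hv0, hv2⟩)
        (by rw [Real.dist_eq, abs_of_neg (by linarith)]
            have := min_le_left δ (t i); linarith)
      rw [Real.dist_eq] at h2; exact le_of_lt h2
    · exact ⟨1, one_pos, fun h1 h2 => absurd ⟨h1, h2⟩ hi⟩
  choose d hd0 hd using hQ
  set η : ℝ := min (t 1) ((Finset.range (M+1)).inf' ⟨0, by simp⟩ d) with hηdef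
  have hη0 : 0 < η :=
    lt_min ht1pos ((Finset.lt_inf'_iff _).mpr (fun i _ => hd0 i))
  have hηt1 : η ≤ t 1 := min_le_left _ _
  have hηd : ∀ i ≤ M, η ≤ d i := by
    intro i hi
    exact le_trans (min_le_right _ _)
      (Finset.inf'_le _ (Finset.mem_range.mpr (by omega)))
  have hηti : ∀ i, 1 ≤ i → i ≤ M → 0 ≤ t i - η := by
    intro i hi hiM
    have := htmono 1 i hi hiM
    linarith
  -- the perturbation φ and the test function h
  set φ : ℝ → ℝ := fun y => ∑ i ∈ Finset.Ico 1 M,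
    ((s (i+1) - s i)/η) * (Set.Ioc (t i - η) (t i)).indicator (fun _ => (1:ℝ)) y with hφdef
  have hind_int : ∀ (c' d' : ℝ),
      MeasureTheory.Integrable ((Set.Ioc c' d').indicator (fun _ => (1:ℝ))) := by
    intro c' d'
    rw [MeasureTheory.integrable_indicator_iff measurableSet_Ioc]
    exact MeasureTheory.integrableOn_const (measure_Ioc_lt_top).ne
  have hφint : MeasureTheory.Integrable φ := by
    rw [hφdef]
    exact MeasureTheory.integrable_finset_sum _ (fun i _ => (hind_int _ _).const_mul _)
  set h : ℝ → ℝ := fun y => s 1 + ∫ u in (0:ℝ)..y, φ u with hhdef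
  have hprim : ∀ y, 0 ≤ y → h y = s 1 + ∑ i ∈ Finset.Ico 1 M,
      (s (i+1) - s i) * ((min (t i) y - min (t i - η) y)/η) := by
    intro y hy
    rw [hhdef]
    simp only
    congr 1
    rw [hφdef]
    rw [intervalIntegral.integral_finset_sum
      (fun i _ => ((hind_int _ _).const_mul _).intervalIntegrable)]
    refine Finset.sum_congr rfl (fun i hi => ?_)
    rw [Finset.mem_Ico] at hi
    rw [intervalIntegral.integral_const_mul,
      integral_indicator_Ioc _ _ _ (hηti i hi.1 (le_of_lt hi.2)) (by linarith) hy,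
      div_mul_eq_mul_div, mul_div_assoc]
  have hcont : Continuous h := by
    rw [hhdef]
    exact continuous_const.add
      (intervalIntegral.continuous_primitive (fun a b => hφint.intervalIntegrable) 0)
  have hh1 : h 1 = s M := by
    rw [hprim 1 zero_le_one]
    have he : ∀ i ∈ Finset.Ico 1 M,
        (s (i+1) - s i) * ((min (t i) 1 - min (t i - η) 1)/η) = s (i+1) - s i := by
      intro i hi
      rw [Finset.mem_Ico] at hi
      rw [min_eq_left (htmem i (le_of_lt hi.2)).2,
        min_eq_left (by linarith [(htmem i (le_of_lt hi.2)).2] : t i - η ≤ 1)]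
      have : (t i - (t i - η))/η = 1 := by field_simp; ring
      rw [this, mul_one]
    rw [Finset.sum_congr rfl he, tele_sum s 1 M hM]
    ring
  -- boundedness of h
  have hbd : ∀ y ∈ Set.Icc (0:ℝ) 1, |h y| ≤ 1 := by
    intro y hy
    set θ : ℕ → ℝ := fun i => if i = 0 then 1 else (min (t i) y - min (t i - η) y)/η with hθdef
    have hθ01 : ∀ i, 0 ≤ θ i ∧ θ i ≤ 1 := by
      intro i
      rw [hθdef]
      by_cases h' : i = 0
      · simp [h']
      · simp only [h', if_false]
        exact ⟨clamp_nonneg _ _ _ hη0, clamp_le_one _ _ _ hη0⟩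
    have hθanti : ∀ i ∈ Finset.Ico 1 M, 0 ≤ θ (i-1) - θ i := by
      intro i hi
      rw [Finset.mem_Ico] at hi
      rcases Nat.eq_or_lt_of_le hi.1 with h1 | h1
      · rw [hθdef]
        simp only [← h1]
        norm_num
        exact clamp_le_one _ _ _ hη0
      · have hi1 : 1 ≤ i - 1 := by omega
        have hieq : i - 1 ≠ 0 := by omega
        have hine : i ≠ 0 := by omega
        rw [hθdef]
        simp only [hieq, hine, if_false]
        have := clamp_antitone (t (i-1)) (t i) y η hη0 (htmono (i-1) i (by omega) (by omega))
        linarith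
    have hiden : h y = s M * θ (M-1) + ∑ i ∈ Finset.Ico 1 M, s i * (θ (i-1) - θ i) := by
      rw [hprim y hy.1]
      have per : ∀ i ∈ Finset.Ico 1 M,
          (s (i+1) - s i) * ((min (t i) y - min (t i - η) y)/η)
            = ((fun j => s j * θ (j-1)) (i+1) - (fun j => s j * θ (j-1)) i)
              + s i * (θ (i-1) - θ i) := by
        intro i hi
        rw [Finset.mem_Ico] at hi
        have hine : i ≠ 0 := by omega
        simp only [Nat.add_sub_cancel]
        rw [hθdef]
        simp only [hine, if_false]
        ring
      rw [Finset.sum_congr rfl per, Finset.sum_add_distrib,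
        tele_sum (fun j => s j * θ (j-1)) 1 M hM]
      have : θ (1-1) = 1 := by rw [hθdef]; simp
      simp only [this]
      ring
    rw [hiden]
    have habs : |∑ i ∈ Finset.Ico 1 M, s i * (θ (i-1) - θ i)|
        ≤ ∑ i ∈ Finset.Ico 1 M, (θ (i-1) - θ i) := by
      refine le_trans (Finset.abs_sum_le_sum_abs _ _) (Finset.sum_le_sum (fun i hi => ?_))
      rw [abs_mul, hs_abs, one_mul, abs_of_nonneg (hθanti i hi)]
    have htel : ∑ i ∈ Finset.Ico 1 M, (θ (i-1) - θ i) = 1 - θ (M-1) := by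
      have per : ∀ i ∈ Finset.Ico 1 M, θ (i-1) - θ i
          = (fun j => -θ (j-1)) (i+1) - (fun j => -θ (j-1)) i := by
        intro i hi
        simp only [Nat.add_sub_cancel]
        ring
      rw [Finset.sum_congr rfl per, tele_sum (fun j => -θ (j-1)) 1 M hM]
      have h1 : θ (1-1) = 1 := by rw [hθdef]; simp
      rw [h1]
      ring
    refine le_trans (abs_add_le _ _) ?_
    rw [abs_mul, hs_abs, one_mul, abs_of_nonneg (hθ01 (M-1)).1]
    rw [htel] at habs
    linarith
  -- the integral value
  set I : ℝ := (s 1 + ∫ u in (0:ℝ)..(1:ℝ), φ u) * g 1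
      - ∫ u in Set.Ioc (0:ℝ) 1, g u * φ u with hIdef
  have hRS : RSIntegralEq h g I := by
    rw [hhdef, hIdef]
    exact rs_exists g φ ((eVariationOn g (Set.Icc 0 1)).toReal) (s 1) h0
      (g_bdd g hbv h0) hlc hφint
  have hI1 : s 1 + ∫ u in (0:ℝ)..(1:ℝ), φ u = s M := hh1
  -- splitting the integral of g * φ
  have hTsub : ∀ i, 1 ≤ i → i ≤ M → Set.Ioc (t i - η) (t i) ⊆ Set.Ioc (0:ℝ) 1 := by
    intro i h1 h2 v hv
    exact ⟨lt_of_le_of_lt (hηti i h1 h2) hv.1, le_trans hv.2 (htmem i h2).2⟩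
  have hgint := g_intOn g hbv h0
  have hsplit : ∫ u in Set.Ioc (0:ℝ) 1, g u * φ u
      = ∑ i ∈ Finset.Ico 1 M, ((s (i+1) - s i)/η) * ∫ u in Set.Ioc (t i - η) (t i), g u := by
    have hexp : ∀ u, g u * φ u = ∑ i ∈ Finset.Ico 1 M,
        ((s (i+1) - s i)/η) * ((Set.Ioc (t i - η) (t i)).indicator g u) := by
      intro u
      rw [hφdef]
      simp only
      rw [Finset.mul_sum]
      refine Finset.sum_congr rfl (fun i _ => ?_)
      by_cases hmem : u ∈ Set.Ioc (t i - η) (t i)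
      · rw [Set.indicator_of_mem hmem, Set.indicator_of_mem hmem]
        ring
      · rw [Set.indicator_of_notMem hmem, Set.indicator_of_notMem hmem]
        ring
    simp only [hexp]
    rw [MeasureTheory.integral_finset_sum _ (fun i hi => ?_)]
    · refine Finset.sum_congr rfl (fun i hi => ?_)
      rw [Finset.mem_Ico] at hi
      rw [MeasureTheory.integral_const_mul,
        MeasureTheory.setIntegral_indicator measurableSet_Ioc,
        Set.inter_eq_self_of_subset_right (hTsub i hi.1 (le_of_lt hi.2))]
    · rw [Finset.mem_Ico] at hi
      refine MeasureTheory.Integrable.const_mul ?_ _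
      exact (hgint.indicator measurableSet_Ioc).mono_set
        (by intro v hv; exact hv)
  -- per-interval estimate
  have hest : ∀ i ∈ Finset.Ico 1 M,
      |(∫ u in Set.Ioc (t i - η) (t i), g u) - η * g (t i)| ≤ ε₂ * η := by
    intro i hi
    rw [Finset.mem_Ico] at hi
    have hsub := hTsub i hi.1 (le_of_lt hi.2)
    have hint_i : MeasureTheory.IntegrableOn g (Set.Ioc (t i - η) (t i)) :=
      hgint.mono_set hsub
    have hvol : MeasureTheory.volume (Set.Ioc (t i - η) (t i)) = ENNReal.ofReal η := by
      rw [Real.volume_Ioc]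
      congr 1
      ring
    have hconst : ∫ _ in Set.Ioc (t i - η) (t i), g (t i) = η * g (t i) := by
      rw [MeasureTheory.setIntegral_const, measureReal_def, hvol, ENNReal.toReal_ofReal (le_of_lt hη0),
        smul_eq_mul]
    have heq : (∫ u in Set.Ioc (t i - η) (t i), g u) - η * g (t i)
        = ∫ u in Set.Ioc (t i - η) (t i), (g u - g (t i)) := by
      rw [MeasureTheory.integral_sub hint_i (MeasureTheory.integrableOn_const
        (by rw [hvol]; exact ENNReal.ofReal_ne_top)), hconst]
    rw [heq]
    have hb : ∀ v ∈ Set.Ioc (t i - η) (t i), ‖g v - g (t i)‖ ≤ ε₂ := by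
      intro v hv
      rcases eq_or_lt_of_le hv.2 with hveq | hvlt
      · rw [hveq]; simp [le_of_lt hε₂]
      · rw [Real.norm_eq_abs]
        refine hd i hi.1 hi.2 v ?_ hvlt
        have := hηd i (le_of_lt hi.2)
        linarith [hv.1]
    have hconst_int : MeasureTheory.IntegrableOn (fun _ : ℝ => g (t i))
        (Set.Ioc (t i - η) (t i)) := MeasureTheory.integrableOn_const
      (by rw [hvol]; exact ENNReal.ofReal_ne_top)
    have := MeasureTheory.norm_setIntegral_le_of_norm_le_const
      (by rw [hvol]; exact ENNReal.ofReal_lt_top) hb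
      (f := fun u => g u - g (t i)) (μ := MeasureTheory.volume)
    rw [Real.norm_eq_abs] at this
    refine le_trans this ?_
    rw [measureReal_def, hvol, ENNReal.toReal_ofReal (le_of_lt hη0)]
  -- total error estimate
  have hE : |(∫ u in Set.Ioc (0:ℝ) 1, g u * φ u)
      - ∑ i ∈ Finset.Ico 1 M, (s (i+1) - s i) * g (t i)| ≤ ε₀ / 2 := by
    rw [hsplit, ← Finset.sum_sub_distrib]
    have per : ∀ i ∈ Finset.Ico 1 M,
        ((s (i+1) - s i)/η) * (∫ u in Set.Ioc (t i - η) (t i), g u)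
          - (s (i+1) - s i) * g (t i)
        = ((s (i+1) - s i)/η) * ((∫ u in Set.Ioc (t i - η) (t i), g u) - η * g (t i)) := by
      intro i _
      field_simp
    rw [Finset.sum_congr rfl per]
    refine le_trans (Finset.abs_sum_le_sum_abs _ _) ?_
    have hterm : ∀ i ∈ Finset.Ico 1 M,
        |((s (i+1) - s i)/η) * ((∫ u in Set.Ioc (t i - η) (t i), g u) - η * g (t i))|
          ≤ 2 * ε₂ := by
      intro i hi
      rw [abs_mul, abs_div]
      have h1 : |s (i+1) - s i| ≤ 2 := by
        calc |s (i+1) - s i| ≤ |s (i+1)| + |s i| := abs_sub _ _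
        _ = 2 := by rw [hs_abs, hs_abs]; norm_num
      have h2 := hest i hi
      rw [abs_of_pos hη0]
      calc |s (i+1) - s i| / η * |(∫ u in Set.Ioc (t i - η) (t i), g u) - η * g (t i)|
          ≤ 2 / η * (ε₂ * η) := by
            apply mul_le_mul ((div_le_div_iff_of_pos_right hη0).mpr h1) h2 (abs_nonneg _) (by positivity)
      _ = 2 * ε₂ := by field_simp
    refine le_trans (Finset.sum_le_sum hterm) ?_
    rw [Finset.sum_const, Nat.card_Ico, nsmul_eq_mul]
    have hcast : ((M - 1 : ℕ) : ℝ) ≤ (M:ℝ) := Nat.cast_le.mpr (Nat.sub_le M 1)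
    have key : ε₂ * (4*(M:ℝ)+4) = ε₀ := by
      rw [hε₂def]; field_simp
    nlinarith [key, hε₂.le, hcast, (Nat.cast_nonneg (M - 1) : (0:ℝ) ≤ ((M-1:ℕ):ℝ))]
  -- Abel summation for the target sum
  have hAbel : ∑ j ∈ Finset.range M, |g (t (j+1)) - g (t j)|
      = s M * g 1 - ∑ i ∈ Finset.Ico 1 M, (s (i+1) - s i) * g (t i) := by
    have per : ∀ j ∈ Finset.range M, |g (t (j+1)) - g (t j)|
        = ((fun j => s j * g (t j)) (j+1) - (fun j => s j * g (t j)) j)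
          + g (t j) * (s j - s (j+1)) := by
      intro j _
      rw [← hs_mul j]
      simp only
      ring
    rw [Finset.sum_congr rfl per, Finset.sum_add_distrib, Finset.range_eq_Ico,
      tele_sum (fun j => s j * g (t j)) 0 M (by omega)]
    have h00 : s 0 * g (t 0) = 0 := by rw [ht0, h0]; ring
    rw [h00, sub_zero, Finset.sum_eq_sum_Ico_succ_bot (by omega : 0 < M)]
    have h01 : g (t 0) * (s 0 - s 1) = 0 := by rw [ht0, h0]; ring
    rw [h01, htM]
    have per2 : ∀ i ∈ Finset.Ico 1 M, g (t i) * (s i - s (i+1))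
        = -((s (i+1) - s i) * g (t i)) := by
      intro i _
      ring
    rw [Finset.sum_congr rfl per2, Finset.sum_neg_distrib]
    ring
  -- conclusion
  refine ⟨h, I, hcont.continuousOn, hbd, hRS, ?_⟩
  have hIval : I = (∑ j ∈ Finset.range M, |g (t (j+1)) - g (t j)|)
      - ((∫ u in Set.Ioc (0:ℝ) 1, g u * φ u)
          - ∑ i ∈ Finset.Ico 1 M, (s (i+1) - s i) * g (t i)) := by
    rw [hIdef, hI1, hAbel]
    ring
  have habs := abs_le.mp hE
  have hfin : ∑ j ∈ Finset.range M, |g (t (j+1)) - g (t j)| - ε₀ < I := by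
    rw [hIval]
    have : ε₀ / 2 < ε₀ := by linarith
    linarith [habs.2]
  linarith [le_abs_self I]

end construct

section final

lemma zero_mem_S (g : ℝ → ℝ) :
    (0:ℝ) ∈ {y : ℝ | ∃ (h : ℝ → ℝ) (I : ℝ), ContinuousOn h (Set.Icc 0 1) ∧
        (∀ x ∈ Set.Icc (0:ℝ) 1, |h x| ≤ 1) ∧ RSIntegralEq h g I ∧ y = |I|} := by
  refine ⟨fun _ => 0, 0, continuousOn_const, by intro x _; norm_num, ?_, by norm_num⟩
  intro ε hε
  refine ⟨1, by norm_num, fun n x _ _ => ?_⟩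
  have : rsSum g (fun _ => 0) n x = 0 := by
    rw [rsSum]
    simp
  rw [this]
  simpa using hε

lemma lower_exists (g : ℝ → ℝ)
    (hbv : BoundedVariationOn g (Set.Icc 0 1))
    (h0 : g 0 = 0)
    (hlc : ∀ x ∈ Set.Ioo (0:ℝ) 1,
      Filter.Tendsto g (nhdsWithin x (Set.Ioo 0 x)) (nhds (g x)))
    (ε : ℝ) (hε : 0 < ε) :
    ∃ y ∈ {y : ℝ | ∃ (h : ℝ → ℝ) (I : ℝ), ContinuousOn h (Set.Icc 0 1) ∧
        (∀ x ∈ Set.Icc (0:ℝ) 1, |h x| ≤ 1) ∧ RSIntegralEq h g I ∧ y = |I|},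
      (eVariationOn g (Set.Icc 0 1)).toReal - ε < y := by
  set V : ℝ := (eVariationOn g (Set.Icc 0 1)).toReal with hV
  by_cases hc : V - ε < 0
  · exact ⟨0, zero_mem_S g, hc⟩
  · push_neg at hc
    have h1 : ENNReal.ofReal (V - ε/2) < eVariationOn g (Set.Icc 0 1) := by
      rw [← ENNReal.ofReal_toReal hbv, ← hV]
      exact (ENNReal.ofReal_lt_ofReal_iff (by linarith)).mpr (by linarith)
    rw [eVariationOn, lt_iSup_iff] at h1
    obtain ⟨⟨n, ⟨u, hu, us⟩⟩, hlt⟩ := h1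
    have hsum_eq : ∑ i ∈ Finset.range n, edist (g (u (i + 1))) (g (u i))
        = ENNReal.ofReal (∑ i ∈ Finset.range n, |g (u (i+1)) - g (u i)|) := by
      rw [ENNReal.ofReal_sum_of_nonneg (fun i _ => abs_nonneg _)]
      refine Finset.sum_congr rfl (fun i _ => ?_)
      rw [edist_dist, Real.dist_eq]
    rw [hsum_eq] at hlt
    have hreal : V - ε/2 < ∑ i ∈ Finset.range n, |g (u (i+1)) - g (u i)| :=
      (ENNReal.ofReal_lt_ofReal_iff_of_nonneg (by linarith)).mp hlt
    obtain ⟨M, t, hM, ht0, htM, hts, htmem, hsum⟩ := refine_partition g n u hu us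
    obtain ⟨h, I, hcont, hbd1, hRS, hgt⟩ :=
      construct g hbv h0 hlc M t hM ⟨ht0, htM, hts⟩ (ε/2) (by positivity)
    refine ⟨|I|, ⟨h, I, hcont, hbd1, hRS, rfl⟩, ?_⟩
    have : V - ε = (V - ε/2) - ε/2 := by ring
    linarith

end final

/-- For a normalized function g of bounded variation, the operator
norm of F_g : h ↦ ∫ h dg, i.e. the supremum of |∫ h dg| over continuous h with
‖h‖ ≤ 1, equals Var(g). -/
theorem op_norm_eq_variation (g : ℝ → ℝ)
    (hbv : BoundedVariationOn g (Set.Icc 0 1))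
    (h0 : g 0 = 0)
    (hlc : ∀ x ∈ Set.Ioo (0:ℝ) 1,
      Filter.Tendsto g (nhdsWithin x (Set.Ioo 0 x)) (nhds (g x))) :
    sSup {y : ℝ | ∃ (h : ℝ → ℝ) (I : ℝ), ContinuousOn h (Set.Icc 0 1) ∧
        (∀ x ∈ Set.Icc (0:ℝ) 1, |h x| ≤ 1) ∧ RSIntegralEq h g I ∧ y = |I|}
      = variationOnFromTo g (Set.Icc 0 1) 0 1 := by
  set S := {y : ℝ | ∃ (h : ℝ → ℝ) (I : ℝ), ContinuousOn h (Set.Icc 0 1) ∧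
        (∀ x ∈ Set.Icc (0:ℝ) 1, |h x| ≤ 1) ∧ RSIntegralEq h g I ∧ y = |I|} with hS
  have hvar : variationOnFromTo g (Set.Icc 0 1) 0 1
      = (eVariationOn g (Set.Icc 0 1)).toReal := by
    rw [variationOnFromTo.eq_of_le g _ (by norm_num : (0:ℝ) ≤ 1)]
    congr 1
    rw [Set.inter_eq_self_of_subset_right (by intro x hx; exact hx)]
  have hub : ∀ y ∈ S, y ≤ (eVariationOn g (Set.Icc 0 1)).toReal := by
    rintro y ⟨h, I, hcont, hb, hRS, rfl⟩
    exact abs_I_le_var g hbv h I hb hRS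
  have hne : S.Nonempty := ⟨0, zero_mem_S g⟩
  have hbdd : BddAbove S := ⟨_, hub⟩
  rw [hvar]
  apply le_antisymm
  · exact csSup_le hne hub
  · refine le_of_forall_pos_le_add (fun ε hε => ?_)
    obtain ⟨y, hy, hlt⟩ := lower_exists g hbv h0 hlc ε hε
    have := le_csSup hbdd hy
    linarith
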